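/- Let Q : [1,∞) → ℝ be measurable, bounded on [1,2], and suppose there exists K > 0 such that |Q(t)| ≤ K·log t for all t ≥ 2. Then for every complex s with |s−1| < 1, s·∫₁^∞ Q(t)·t^{−s−1} dt = Σ_{m=0}^∞ y_m·(s−1)^m/m!, where y_m = (−1)^m·∫₁^∞ (log^m(t) − m·log^{m−1}(t))·Q(t)/t² dt (interpreted as ∫₁^∞ Q(t)/t² dt when m = 0), each integral converging absolutely. -/

import Mathlib

open MeasureTheory Real Set

private lemma log_pow_le_aux {ε t : ℝ} (hε : 0 < ε) (ht : 1 ≤ t) (m : ℕ) :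
    Real.log t ^ m ≤ m.factorial * t ^ ε / ε ^ m := by
  have ht0 : (0 : ℝ) < t := lt_of_lt_of_le one_pos ht
  have hl : 0 ≤ Real.log t := Real.log_nonneg ht
  have hfac : (0 : ℝ) < m.factorial := by positivity
  have h1 : (ε * Real.log t) ^ m / m.factorial ≤ Real.exp (ε * Real.log t) :=
    Real.pow_div_factorial_le_exp (x := ε * Real.log t) (by positivity) m
  rw [Real.rpow_def_of_pos ht0, mul_comm (Real.log t) ε]
  rw [div_le_iff₀ hfac, mul_pow] at h1
  rw [le_div_iff₀ (pow_pos hε m)]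
  nlinarith [pow_pos hε m, pow_nonneg hl m]

private lemma rpow_int_on_Ici {a : ℝ} (ha : a < -1) :
    IntegrableOn (fun t : ℝ => t ^ a) (Ici (1:ℝ)) ∧
      ∫ t in Ici (1:ℝ), t ^ a = -1 / (a + 1) := by
  constructor
  · rw [integrableOn_Ici_iff_integrableOn_Ioi]
    exact integrableOn_Ioi_rpow_of_lt ha one_pos
  · rw [integral_Ici_eq_integral_Ioi, integral_Ioi_rpow_of_lt ha one_pos]
    rw [Real.one_rpow]
private lemma key_bound (Q : ℝ → ℝ) (hmeas : Measurable Q) {M K ε : ℝ}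
    (hM : ∀ t ∈ Icc (1:ℝ) 2, |Q t| ≤ M)
    (hKb : ∀ t ≥ (2:ℝ), |Q t| ≤ K * Real.log t) (hK0 : 0 ≤ K) (hM0 : 0 ≤ M)
    (hε : 0 < ε) (hε1 : ε < 1) (m : ℕ) :
    IntegrableOn (fun t => Real.log t ^ m * Q t / t ^ 2) (Ici (1:ℝ)) ∧
    ∫ t in Ici (1:ℝ), |Real.log t ^ m * Q t / t ^ 2| ≤
      M + K * (m+1).factorial / ε ^ (m+1) / (1 - ε) := by
  set c : ℝ := K * (m+1).factorial / ε ^ (m+1) with hc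
  have hc0 : 0 ≤ c := by positivity
  set g : ℝ → ℝ := fun t => M * t ^ (-2 : ℝ) + c * t ^ (ε - 2) with hg
  have hint2 := rpow_int_on_Ici (a := -2) (by norm_num)
  have hintε := rpow_int_on_Ici (a := ε - 2) (by linarith)
  have hgint : IntegrableOn g (Ici (1:ℝ)) :=
    (hint2.1.const_mul M).add (hintε.1.const_mul c)
  have hgval : ∫ t in Ici (1:ℝ), g t = M + c / (1 - ε) := by
    rw [hg, integral_add (hint2.1.const_mul M) (hintε.1.const_mul c),
      integral_const_mul, integral_const_mul, hint2.2, hintε.2]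
    have e1 : (-1:ℝ)/(-2+1) = 1 := by norm_num
    have e2 : (-1:ℝ)/(ε-2+1) = 1/(1-ε) := by
      rw [div_eq_div_iff (by linarith) (by linarith)]; ring
    rw [e1, e2, mul_one]
    rw [mul_one_div]
  have hptwise : ∀ t ∈ Ici (1:ℝ), |Real.log t ^ m * Q t / t ^ 2| ≤ g t := by
    intro t ht
    simp only [mem_Ici] at ht
    have ht0 : (0:ℝ) < t := by linarith
    have hl0 : 0 ≤ Real.log t := Real.log_nonneg ht
    have ht2 : (t:ℝ) ^ (2:ℕ) = t ^ (2:ℝ) := by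
      rw [← Real.rpow_natCast]; norm_num
    have ht2 : t ^ (-2:ℝ) = (t ^ (2:ℕ))⁻¹ := by
      rw [show ((-2:ℝ)) = -((2:ℕ):ℝ) by norm_num, Real.rpow_neg ht0.le, Real.rpow_natCast]
    have ht2e : t ^ (ε - 2) = t ^ ε * (t ^ (2:ℕ))⁻¹ := by
      rw [show ε - 2 = ε + -((2:ℕ):ℝ) by push_cast; ring, Real.rpow_add ht0,
        Real.rpow_neg ht0.le, Real.rpow_natCast]
    have htp : (0:ℝ) < t ^ (2:ℕ) := by positivity
    have habs : |Real.log t ^ m * Q t / t ^ 2| = Real.log t ^ m * |Q t| / t ^ 2 := by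
      rw [abs_div, abs_mul, abs_of_nonneg (pow_nonneg hl0 m), abs_of_nonneg (le_of_lt htp)]
    rw [habs]
    rcases le_or_gt t 2 with h2 | h2
    · have hQ : |Q t| ≤ M := hM t ⟨ht, h2⟩
      have hlog1 : Real.log t ≤ 1 := by
        calc Real.log t ≤ Real.log 2 := Real.log_le_log ht0 h2
        _ ≤ 1 := by
          have := Real.log_two_lt_d9
          linarith
      have hpow : Real.log t ^ m ≤ 1 := pow_le_one₀ hl0 hlog1
      have hnum : Real.log t ^ m * |Q t| ≤ M :=
        calc Real.log t ^ m * |Q t| ≤ 1 * M :=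
              mul_le_mul hpow hQ (abs_nonneg _) one_pos.le
        _ = M := one_mul M
      have h1 : Real.log t ^ m * |Q t| / t ^ 2 ≤ M * t ^ (-2:ℝ) := by
        rw [ht2, mul_comm M, inv_mul_eq_div]
        exact (div_le_div_iff_of_pos_right htp).mpr hnum
      have h2' : (0:ℝ) ≤ c * t ^ (ε - 2) :=
        mul_nonneg hc0 (Real.rpow_nonneg ht0.le _)
      simp only [hg]
      linarith
    · have hQ : |Q t| ≤ K * Real.log t := hKb t h2.le
      have hle : Real.log t ^ m * |Q t| ≤ c * t ^ ε := by
        calc Real.log t ^ m * |Q t| ≤ Real.log t ^ m * (K * Real.log t) :=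
              mul_le_mul_of_nonneg_left hQ (pow_nonneg hl0 m)
        _ = K * Real.log t ^ (m+1) := by ring
        _ ≤ K * ((m+1).factorial * t ^ ε / ε ^ (m+1)) :=
              mul_le_mul_of_nonneg_left (log_pow_le_aux hε ht (m+1)) hK0
        _ = c * t ^ ε := by rw [hc]; ring
      have h1 : Real.log t ^ m * |Q t| / t ^ 2 ≤ c * t ^ (ε - 2) := by
        rw [ht2e, ← mul_assoc, ← div_eq_mul_inv]
        exact (div_le_div_iff_of_pos_right htp).mpr hle
      have h2' : (0:ℝ) ≤ M * t ^ (-2:ℝ) :=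
        mul_nonneg hM0 (Real.rpow_nonneg ht0.le _)
      simp only [hg]
      linarith
  have hmeas' : AEStronglyMeasurable (fun t => Real.log t ^ m * Q t / t ^ 2)
      (volume.restrict (Ici (1:ℝ))) := by
    apply Measurable.aestronglyMeasurable
    exact ((Real.measurable_log.pow_const m).mul hmeas).div (measurable_id.pow_const 2)
  have hfint : IntegrableOn (fun t => Real.log t ^ m * Q t / t ^ 2) (Ici (1:ℝ)) := by
    apply Integrable.mono' hgint hmeas'
    filter_upwards [ae_restrict_mem measurableSet_Ici] with t ht
    rw [Real.norm_eq_abs]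
    exact hptwise t ht
  refine ⟨hfint, ?_⟩
  calc ∫ t in Ici (1:ℝ), |Real.log t ^ m * Q t / t ^ 2| ≤ ∫ t in Ici (1:ℝ), g t := by
        apply setIntegral_mono_on hfint.abs hgint measurableSet_Ici
        exact hptwise
  _ = M + c / (1 - ε) := hgval
  _ = M + K * (m+1).factorial / ε ^ (m+1) / (1 - ε) := by rw [hc]



/-- If `Q` is measurable, bounded on `[1,2]`, and `|Q t| ≤ K log t` for `t ≥ 2`
(for some `K > 0`), and
`y_m = (-1)^m ∫₁^∞ (log^m t - m log^{m-1} t) Q(t)/t² dt` (which is `∫₁^∞ Q(t)/t² dt`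
for `m = 0`, since then the first factor is `1`), then each integral converges
absolutely and, for every complex `s` with `|s-1| < 1`,
`s ∫₁^∞ Q(t) t^{-s-1} dt = ∑_m y_m (s-1)^m / m!`. -/
theorem mul_integral_eq_expansion (Q : ℝ → ℝ) (hmeas : Measurable Q)
    (hbdd : ∃ M : ℝ, ∀ t ∈ Set.Icc (1 : ℝ) 2, |Q t| ≤ M)
    (hK : ∃ K > (0 : ℝ), ∀ t ≥ (2 : ℝ), |Q t| ≤ K * Real.log t)
    (y : ℕ → ℝ)
    (hy : ∀ m : ℕ, y m = (-1 : ℝ) ^ m *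
      ∫ t in Set.Ici (1 : ℝ),
        (Real.log t ^ m - m * Real.log t ^ (m - 1)) * Q t / t ^ 2) :
    (∀ m : ℕ, MeasureTheory.IntegrableOn
      (fun t : ℝ => (Real.log t ^ m - m * Real.log t ^ (m - 1)) * Q t / t ^ 2)
      (Set.Ici (1 : ℝ))) ∧
    ∀ s : ℂ, ‖s - 1‖ < 1 →
      Summable (fun m : ℕ => (y m : ℂ) * (s - 1) ^ m / (Nat.factorial m : ℂ)) ∧
      s * ∫ t in Set.Ici (1 : ℝ), (Q t : ℂ) * (t : ℂ) ^ (-s - 1) =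
        ∑' m : ℕ, (y m : ℂ) * (s - 1) ^ m / (Nat.factorial m : ℂ) := by
  obtain ⟨M, hM⟩ := hbdd
  obtain ⟨K, hKpos, hKb⟩ := hK
  have hM0 : 0 ≤ M := le_trans (abs_nonneg _) (hM 1 ⟨le_refl 1, by norm_num⟩)
  -- half-integrability for each m (with ε = 1/2, say)
  have key : ∀ ε : ℝ, 0 < ε → ε < 1 → ∀ m : ℕ,
      IntegrableOn (fun t => Real.log t ^ m * Q t / t ^ 2) (Ici (1:ℝ)) ∧
      ∫ t in Ici (1:ℝ), |Real.log t ^ m * Q t / t ^ 2| ≤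
        M + K * (m+1).factorial / ε ^ (m+1) / (1 - ε) :=
    fun ε hε hε1 m => key_bound Q hmeas hM hKb hKpos.le hM0 hε hε1 m
  have keyhalf := key (1/2) (by norm_num) (by norm_num)
  -- pointwise decomposition of the integrand
  have heq : ∀ m : ℕ, (fun t : ℝ =>
      (Real.log t ^ m - m * Real.log t ^ (m - 1)) * Q t / t ^ 2) =
      fun t : ℝ => Real.log t ^ m * Q t / t ^ 2 -
        (m : ℝ) * (Real.log t ^ (m - 1) * Q t / t ^ 2) := by
    intro m; funext t; ring
  have hint : ∀ m : ℕ, MeasureTheory.IntegrableOn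
      (fun t : ℝ => (Real.log t ^ m - m * Real.log t ^ (m - 1)) * Q t / t ^ 2)
      (Set.Ici (1 : ℝ)) := by
    intro m
    rw [heq m]
    exact (keyhalf m).1.sub (((keyhalf (m-1)).1).const_mul (m : ℝ))
  refine ⟨hint, ?_⟩
  set a : ℕ → ℝ := fun m => ∫ t in Ici (1:ℝ), Real.log t ^ m * Q t / t ^ 2 with ha
  have hy' : ∀ m : ℕ, y m = (-1:ℝ) ^ m * (a m - m * a (m - 1)) := by
    intro m
    rw [hy m, heq m,
      integral_sub (keyhalf m).1 (((keyhalf (m-1)).1).const_mul (m : ℝ)),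
      integral_const_mul]
  intro s hs
  obtain ⟨r, hr⟩ : ∃ r : ℝ, r = ‖s - 1‖ := ⟨_, rfl⟩
  rw [← hr] at hs
  have hr0 : 0 ≤ r := hr ▸ norm_nonneg _
  obtain ⟨ε, hε, hε1, hrε⟩ : ∃ ε : ℝ, 0 < ε ∧ ε < 1 ∧ r < ε :=
    ⟨(1 + r) / 2, by linarith, by linarith, by linarith⟩
  obtain ⟨q, hq_def⟩ : ∃ q : ℝ, q = r / ε := ⟨_, rfl⟩
  have hq0 : 0 ≤ q := hq_def ▸ div_nonneg hr0 hε.le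
  have hq1 : q < 1 := hq_def ▸ (div_lt_one hε).mpr hrε
  have hrq : r ≤ q := by
    rw [hq_def, le_div_iff₀ hε]; nlinarith
  obtain ⟨B, hB⟩ : ∃ B : ℕ → ℝ,
      B = fun m => M + K * (m+1).factorial / ε ^ (m+1) / (1 - ε) := ⟨_, rfl⟩
  obtain ⟨C, hC⟩ : ∃ C : ℝ, C = M + K / (ε * (1 - ε)) := ⟨_, rfl⟩
  have h1ε : (0:ℝ) < 1 - ε := by linarith
  -- the crucial numeric bound
  have hDb : ∀ m : ℕ, r ^ m * B m / m.factorial ≤ C * ((m+1) * q ^ m) := by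
    intro m
    have hfac0 : ((m.factorial : ℝ)) ≠ 0 := by positivity
    have hfac1 : (1:ℝ) ≤ m.factorial := by
      exact_mod_cast m.factorial_pos
    have hrm : r ^ m ≤ q ^ m := pow_le_pow_left₀ hr0 hrq m
    have hqm0 : 0 ≤ q ^ m := pow_nonneg hq0 m
    have hm1 : (1:ℝ) ≤ (m:ℝ) + 1 := by
      have : (0:ℝ) ≤ (m:ℝ) := Nat.cast_nonneg m
      linarith
    have e : r ^ m * B m / m.factorial =
        M * (r ^ m / m.factorial) + (K / (ε * (1 - ε))) * (((m:ℝ)+1) * (r ^ m / ε ^ m)) := by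
      rw [hB]
      simp only []
      rw [Nat.factorial_succ]
      push_cast
      field_simp
      ring
    rw [e]
    have h1 : M * (r ^ m / m.factorial) ≤ M * (((m:ℝ)+1) * q ^ m) := by
      apply mul_le_mul_of_nonneg_left _ hM0
      calc r ^ m / m.factorial ≤ r ^ m / 1 :=
            div_le_div_of_nonneg_left (pow_nonneg hr0 m) one_pos hfac1
      _ = r ^ m := div_one _
      _ ≤ q ^ m := hrm
      _ = 1 * q ^ m := (one_mul _).symm
      _ ≤ ((m:ℝ)+1) * q ^ m := mul_le_mul_of_nonneg_right hm1 hqm0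
    have h2 : r ^ m / ε ^ m = q ^ m := by
      rw [hq_def, div_pow]
    rw [h2, hC]
    nlinarith [mul_nonneg (mul_nonneg (by linarith : (0:ℝ) ≤ (m:ℝ)+1) hqm0)
      (div_nonneg hKpos.le (mul_nonneg hε.le h1ε.le))]
  -- summable majorant
  have hmaj : Summable (fun m : ℕ => C * ((m+1) * q ^ m)) := by
    apply Summable.mul_left
    have h1 : Summable (fun m : ℕ => (m:ℝ) * q ^ m) := by
      have := summable_pow_mul_geometric_of_norm_lt_one (R := ℝ) 1
        (r := q) (by rwa [Real.norm_eq_abs, abs_of_nonneg hq0])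
      simpa using this
    have h2 : Summable (fun m : ℕ => q ^ m) := summable_geometric_of_lt_one hq0 hq1
    have h3 := h1.add h2
    apply h3.congr
    intro m; push_cast; ring
  -- bounds on a
  have haB : ∀ m : ℕ, |a m| ≤ B m := by
    intro m
    calc |a m| = ‖∫ t in Ici (1:ℝ), Real.log t ^ m * Q t / t ^ 2‖ :=
          (Real.norm_eq_abs _).symm
    _ ≤ ∫ t in Ici (1:ℝ), ‖Real.log t ^ m * Q t / t ^ 2‖ :=
          norm_integral_le_integral_norm _
    _ = ∫ t in Ici (1:ℝ), |Real.log t ^ m * Q t / t ^ 2| := by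
          simp only [Real.norm_eq_abs]
    _ ≤ M + K * (m+1).factorial / ε ^ (m+1) / (1 - ε) := (key ε hε hε1 m).2
    _ = B m := by rw [hB]
  -- the series u
  obtain ⟨u, hu_def⟩ : ∃ u : ℕ → ℂ,
      u = fun m => ((1 - s) ^ m / (m.factorial : ℂ)) * (a m : ℂ) := ⟨_, rfl⟩
  have hnormu : ∀ m : ℕ, ‖u m‖ ≤ C * ((m+1) * q ^ m) := by
    intro m
    have h0 : ‖u m‖ = r ^ m / m.factorial * |a m| := by
      rw [hu_def]
      simp only [norm_mul, norm_div, norm_pow, Complex.norm_real, Complex.norm_natCast,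
        Real.norm_eq_abs]
      rw [norm_sub_rev, ← hr]
    rw [h0]
    calc r ^ m / m.factorial * |a m| ≤ r ^ m / m.factorial * B m := by
          apply mul_le_mul_of_nonneg_left (haB m) (by positivity)
    _ = r ^ m * B m / m.factorial := by ring
    _ ≤ C * ((m+1) * q ^ m) := hDb m
  have hu : Summable u := Summable.of_norm_bounded hmaj hnormu
  -- the functions F
  obtain ⟨F, hF⟩ : ∃ F : ℕ → ℝ → ℂ, F = fun m t =>
      ((1 - s) ^ m / (m.factorial : ℂ)) * ((Real.log t ^ m * Q t / t ^ 2 : ℝ) : ℂ) := ⟨_, rfl⟩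
  have hFint : ∀ m, Integrable (F m) (volume.restrict (Ici (1:ℝ))) := by
    intro m
    rw [hF]
    exact ((key ε hε hε1 m).1.ofReal).const_mul _
  have hFnorm : ∀ m, ∫ t in Ici (1:ℝ), ‖F m t‖ ≤ C * ((m+1) * q ^ m) := by
    intro m
    have h0 : ∀ t : ℝ, ‖F m t‖ = (r ^ m / m.factorial) * |Real.log t ^ m * Q t / t ^ 2| := by
      intro t
      rw [hF]
      simp only [norm_mul, norm_div, norm_pow, Complex.norm_real, Complex.norm_natCast,
        Real.norm_eq_abs]
      rw [norm_sub_rev, ← hr, abs_div, abs_mul, abs_pow, abs_pow]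
    calc ∫ t in Ici (1:ℝ), ‖F m t‖
        = ∫ t in Ici (1:ℝ), (r ^ m / m.factorial) * |Real.log t ^ m * Q t / t ^ 2| := by
          simp only [h0]
    _ = (r ^ m / m.factorial) * ∫ t in Ici (1:ℝ), |Real.log t ^ m * Q t / t ^ 2| :=
          integral_const_mul _ _
    _ ≤ (r ^ m / m.factorial) * B m := by
          refine mul_le_mul_of_nonneg_left ?_ (by positivity)
          rw [hB]; exact (key ε hε hε1 m).2
    _ = r ^ m * B m / m.factorial := by ring
    _ ≤ C * ((m+1) * q ^ m) := hDb m
  have hFsum : Summable (fun m => ∫ t in Ici (1:ℝ), ‖F m t‖) :=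
    Summable.of_nonneg_of_le (fun m => integral_nonneg (fun t => norm_nonneg _)) hFnorm hmaj
  have hinter := MeasureTheory.integral_tsum_of_summable_integral_norm hFint hFsum
  have hFval : ∀ m, ∫ t in Ici (1:ℝ), F m t = u m := by
    intro m
    have hcast : ∫ t in Ici (1:ℝ), ((Real.log t ^ m * Q t / t ^ 2 : ℝ) : ℂ) =
        ((∫ t in Ici (1:ℝ), Real.log t ^ m * Q t / t ^ 2 : ℝ) : ℂ) := integral_ofReal
    rw [hF, hu_def]
    simp only []
    rw [integral_const_mul, hcast, ha]
  have hpt : ∀ t ∈ Ici (1:ℝ), (∑' m, F m t) = (Q t : ℂ) * (t : ℂ) ^ (-s - 1) := by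
    intro t ht
    simp only [mem_Ici] at ht
    have ht0 : (0:ℝ) < t := lt_of_lt_of_le one_pos ht
    have htc : (t:ℂ) ≠ 0 := by exact_mod_cast ht0.ne'
    have ht2 : ((t:ℂ)) ^ (2:ℕ) ≠ 0 := pow_ne_zero _ htc
    have h1 : ∀ m : ℕ, F m t = (((1 - s) * (Real.log t : ℂ)) ^ m / (m.factorial : ℂ)) *
        ((Q t : ℂ) / (t:ℂ) ^ (2:ℕ)) := by
      intro m
      have hc2 : ((Real.log t ^ m * Q t / t ^ 2 : ℝ) : ℂ) =
          (Real.log t : ℂ) ^ m * (Q t : ℂ) / (t:ℂ) ^ (2:ℕ) := by push_cast; ring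
      rw [hF]
      simp only []
      rw [hc2, mul_pow]
      ring
    rw [tsum_congr h1, tsum_mul_right]
    have h2 : (∑' m : ℕ, ((1 - s) * (Real.log t : ℂ)) ^ m / (m.factorial : ℂ)) =
        Complex.exp ((1 - s) * (Real.log t : ℂ)) := by
      rw [Complex.exp_eq_exp_ℂ, NormedSpace.exp_eq_tsum_div]
    rw [h2]
    have h3 : Complex.exp ((1 - s) * (Real.log t : ℂ)) = (t:ℂ) ^ ((1:ℂ) - s) := by
      rw [Complex.cpow_def_of_ne_zero htc, Complex.ofReal_log ht0.le, mul_comm]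
    rw [h3]
    have h4 : (t:ℂ) ^ (-s - 1) = (t:ℂ) ^ ((1:ℂ) - s) / (t:ℂ) ^ (2:ℕ) := by
      rw [show (-s - 1 : ℂ) = ((1:ℂ) - s) - ((2:ℕ):ℂ) by push_cast; ring,
        Complex.cpow_sub _ _ htc, Complex.cpow_natCast]
    rw [h4]
    ring
  have hmain : (∫ t in Ici (1:ℝ), (Q t : ℂ) * (t : ℂ) ^ (-s - 1)) = ∑' m, u m := by
    calc ∫ t in Ici (1:ℝ), (Q t : ℂ) * (t : ℂ) ^ (-s - 1)
        = ∫ t in Ici (1:ℝ), (∑' m, F m t) :=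
          (setIntegral_congr_fun measurableSet_Ici hpt).symm
    _ = ∑' m, ∫ t in Ici (1:ℝ), F m t := hinter.symm
    _ = ∑' m, u m := tsum_congr hFval
  -- series algebra
  obtain ⟨w, hw_def⟩ : ∃ w : ℕ → ℂ,
      w = fun m => if m = 0 then 0 else (s - 1) * u (m - 1) := ⟨_, rfl⟩
  have hw1 : ∀ n : ℕ, w (n + 1) = (s - 1) * u n := by intro n; rw [hw_def]; simp
  have hw : Summable w := by
    have h1 : Summable (fun n => w (n + 1)) := by
      simp only [hw1]
      exact hu.mul_left _
    exact (summable_nat_add_iff 1).mp h1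
  have hv : ∀ m : ℕ, (y m : ℂ) * (s - 1) ^ m / (m.factorial : ℂ) = u m + w m := by
    intro m
    cases m with
    | zero =>
      rw [hw_def, hu_def]
      simp [hy' 0]
    | succ n =>
      rw [hw_def, hu_def]
      simp only [Nat.succ_ne_zero, if_false, Nat.add_sub_cancel]
      rw [hy' (n+1)]
      have hneg : ((1:ℂ) - s) ^ n = (-1) ^ n * (s - 1) ^ n := by
        rw [show (1:ℂ) - s = -(s - 1) by ring, neg_pow]
      have hneg1 : ((1:ℂ) - s) ^ (n+1) = (-1) ^ (n+1) * (s - 1) ^ (n+1) := by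
        rw [show (1:ℂ) - s = -(s - 1) by ring, neg_pow]
      have hfc : (((n+1).factorial : ℕ) : ℂ) = ((n:ℂ)+1) * (n.factorial : ℂ) := by
        rw [Nat.factorial_succ]; push_cast; ring
      have hf0 : ((n.factorial : ℕ) : ℂ) ≠ 0 :=
        Nat.cast_ne_zero.mpr n.factorial_ne_zero
      have hn0 : ((n:ℂ) + 1) ≠ 0 := Nat.cast_add_one_ne_zero n
      have hsimp : (n + 1 - 1 : ℕ) = n := by omega
      rw [hsimp]
      push_cast
      rw [hneg, hneg1, hfc]
      field_simp
      ring
  have hsumv : Summable (fun m : ℕ => (y m : ℂ) * (s - 1) ^ m / (m.factorial : ℂ)) := by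
    refine Summable.congr (hu.add hw) ?_
    intro m
    exact (hv m).symm
  refine ⟨hsumv, ?_⟩
  have htv : (∑' m : ℕ, (y m : ℂ) * (s - 1) ^ m / (m.factorial : ℂ)) =
      (∑' m, u m) + ∑' m, w m := by
    rw [tsum_congr hv, Summable.tsum_add hu hw]
  have htw : (∑' m, w m) = (s - 1) * ∑' m, u m := by
    rw [Summable.tsum_eq_zero_add hw]
    have hw0 : w 0 = 0 := by simp [hw_def]
    rw [hw0, zero_add]
    calc (∑' n, w (n+1)) = ∑' n, (s-1) * u n := tsum_congr hw1
    _ = (s-1) * ∑' n, u n := tsum_mul_left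
  rw [hmain, htv, htw]
  ring
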